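/- arXiv:2303.16309 — 2 statements merged into one kernel-verified Lean document; each statement's English description precedes it below -/
import Mathlib

section
/- Let c be an integer with |c| > 2 and let w be a complex root of f(x) = x^4 - c x^2 + 1. Then Q(w) = Q(w + 1/w) if and only if c = a^2 + 2 for some natural number a. -/
open IntermediateField

open Polynomial

lemma rat_sq_int {q : ℚ} {m : ℤ} (h : q ^ 2 = (m : ℚ)) : ∃ k : ℤ, (k : ℚ) = q := by
  have hint : IsIntegral ℤ q :=
    ⟨X ^ 2 - C m, monic_X_pow_sub_C m two_ne_zero, by rw [eval₂_sub, eval₂_pow, eval₂_X, eval₂_C]; simp [h]⟩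
  exact IsIntegrallyClosed.isIntegral_iff.mp hint

lemma mem_adjoin_quadratic {t x : ℂ} {d : ℚ} (ht : t ^ 2 = (d : ℂ))
    (hx : x ∈ ℚ⟮t⟯) : ∃ u v : ℚ, x = (u : ℂ) + (v : ℂ) * t := by
  have hti : IsIntegral ℚ t :=
    ⟨X ^ 2 - C d, monic_X_pow_sub_C d two_ne_zero, by simp [ht]⟩
  have h1 : ℚ⟮t⟯.toSubalgebra = Algebra.adjoin ℚ {t} :=
    adjoin_simple_toSubalgebra_of_isAlgebraic hti.isAlgebraic
  have hx' : x ∈ Algebra.adjoin ℚ {t} := by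
    rw [← h1]; exact hx
  rw [Algebra.adjoin_singleton_eq_range_aeval] at hx'
  obtain ⟨p, hp⟩ := hx'
  have hmm : (X ^ 2 - C d).Monic := monic_X_pow_sub_C d two_ne_zero
  have hr : aeval t (p %ₘ (X ^ 2 - C d)) = x := by
    conv_rhs => rw [← hp, ← modByMonic_add_div p (X ^ 2 - C d)]
    simp [ht]
  have hdeg : (p %ₘ (X ^ 2 - C d)).degree ≤ 1 := by
    have h2 := degree_modByMonic_lt p hmm
    rw [degree_X_pow_sub_C (by norm_num) d] at h2
    exact Order.le_of_lt_succ (by exact_mod_cast h2)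
  have hrepr := eq_X_add_C_of_degree_le_one hdeg
  refine ⟨(p %ₘ (X ^ 2 - C d)).coeff 0, (p %ₘ (X ^ 2 - C d)).coeff 1, ?_⟩
  rw [← hr, hrepr]
  simp
  ring

/-- Let `c` be an integer with `|c| > 2` and `w` a complex root of
`x^4 - c x^2 + 1`. Then `ℚ(w) = ℚ(w + 1/w)` iff `c = a^2 + 2` for some `a : ℕ`. -/
theorem field_eq_iff_trace_condition (c : ℤ) (hc : 2 < |c|) (w : ℂ)
    (hw : w ^ 4 - (c : ℂ) * w ^ 2 + 1 = 0) :
    ℚ⟮w⟯ = ℚ⟮w + w⁻¹⟯ ↔ ∃ a : ℕ, c = (a : ℤ) ^ 2 + 2 := by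
  have hw0 : w ≠ 0 := by
    intro h; rw [h] at hw; norm_num at hw
  set t := w + w⁻¹ with hts
  have hquad : w ^ 2 - t * w + 1 = 0 := by
    rw [hts]; field_simp; ring
  have ht2 : t ^ 2 = (c : ℂ) + 2 := by
    rw [hts]; field_simp; linear_combination hw
  constructor
  · intro h
    have hwmem : w ∈ ℚ⟮t⟯ := h ▸ mem_adjoin_simple_self ℚ w
    obtain ⟨u, v, huv⟩ := mem_adjoin_quadratic (d := (c : ℚ) + 2) (by push_cast; exact ht2) hwmem
    have hq2 : ((u : ℂ) + v * t) ^ 2 - t * ((u : ℂ) + v * t) + 1 = 0 := by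
      rw [← huv]; exact hquad
    have key : ((u * (2 * v - 1) : ℚ) : ℂ) * t
        + ((u ^ 2 + (v ^ 2 - v) * ((c : ℚ) + 2) + 1 : ℚ) : ℂ) = 0 := by
      push_cast
      linear_combination hq2 - ((v : ℂ) ^ 2 - (v : ℂ)) * ht2
    have hs2 : (2 * w - t) ^ 2 = (c : ℂ) - 2 := by
      linear_combination 4 * hquad + ht2
    -- produce a rational equal to 2w - t, or derive a contradiction
    have main : ∃ q : ℚ, ((q : ℂ)) = 2 * w - t := by
      by_cases hA : u * (2 * v - 1) = 0
      · rcases mul_eq_zero.mp hA with hu | hv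
        · -- u = 0 : contradiction
          exfalso
          have hwq : w ^ 2 = ((v ^ 2 * ((c : ℚ) + 2) : ℚ) : ℂ) := by
            push_cast
            linear_combination (w + (v : ℂ) * t) * (by rw [huv, hu]; push_cast; ring :
              w = (v : ℂ) * t) + (v : ℂ) ^ 2 * ht2
          have hqq : ((v ^ 2 * ((c : ℚ) + 2)) ^ 2 - c * (v ^ 2 * ((c : ℚ) + 2)) + 1 : ℚ) = 0 := by
            have := hw
            rw [show w ^ 4 = (w ^ 2) ^ 2 by ring, hwq] at this
            exact_mod_cast this
          have hsq : (2 * (v ^ 2 * ((c : ℚ) + 2)) - c) ^ 2 = ((c ^ 2 - 4 : ℤ) : ℚ) := by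
            push_cast
            linear_combination 4 * hqq
          obtain ⟨k, hk⟩ := rat_sq_int hsq
          have hk2 : k ^ 2 = c ^ 2 - 4 := by
            have : ((k : ℚ)) ^ 2 = ((c ^ 2 - 4 : ℤ) : ℚ) := by rw [hk]; exact hsq
            exact_mod_cast this
          have hA3 : (3 : ℤ) ≤ |c| := hc
          have hk0 : (0 : ℤ) ≤ |k| := abs_nonneg k
          have h1 : (|c| - 1) ^ 2 < |k| ^ 2 := by nlinarith [sq_abs c, sq_abs k]
          have h2 : |c| - 1 < |k| := lt_of_pow_lt_pow_left₀ 2 hk0 h1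
          have h3 : |c| ≤ |k| := by omega
          have h4 : |c| ^ 2 ≤ |k| ^ 2 := pow_le_pow_left₀ (abs_nonneg c) h3 2
          nlinarith [sq_abs c, sq_abs k]
        · -- v = 1/2
          refine ⟨2 * u, ?_⟩
          have hv2 : (v : ℂ) = 1 / 2 := by
            have : v = 1 / 2 := by linarith [hv]
            rw [this]; push_cast; ring
          rw [huv, hv2]; push_cast; ring
      · -- t is rational
        have hAne : ((u * (2 * v - 1) : ℚ) : ℂ) ≠ 0 := by exact_mod_cast hA
        have htq : t = ((-(u ^ 2 + (v ^ 2 - v) * ((c : ℚ) + 2) + 1) : ℚ) : ℂ)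
            / ((u * (2 * v - 1) : ℚ) : ℂ) :=
          (eq_div_iff hAne).mpr (by push_cast; push_cast at key; linear_combination key)
        refine ⟨2 * u + (2 * v - 1) * (-(u ^ 2 + (v ^ 2 - v) * ((c : ℚ) + 2) + 1) / (u * (2 * v - 1))), ?_⟩
        push_cast at hAne
        rw [huv, htq]; push_cast; field_simp; ring
    obtain ⟨q, hq⟩ := main
    have hsq : q ^ 2 = ((c - 2 : ℤ) : ℚ) := by
      have : ((q : ℂ)) ^ 2 = ((c : ℂ)) - 2 := by rw [hq]; exact hs2
      exact_mod_cast this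
    obtain ⟨k, hk⟩ := rat_sq_int hsq
    have hk2 : k ^ 2 = c - 2 := by
      have : ((k : ℚ)) ^ 2 = ((c - 2 : ℤ) : ℚ) := by rw [hk]; exact hsq
      exact_mod_cast this
    refine ⟨k.natAbs, ?_⟩
    have : ((k.natAbs : ℤ)) ^ 2 = k ^ 2 := by
      rw [← Int.abs_eq_natAbs, sq_abs]
    omega
  · rintro ⟨a, rfl⟩
    have hs2 : (2 * w - t) ^ 2 = ((a : ℂ)) ^ 2 := by
      push_cast at ht2 ⊢
      linear_combination 4 * hquad + ht2
    have hfac : (2 * w - t - a) * (2 * w - t + a) = 0 := by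
      linear_combination hs2
    have htm : t ∈ ℚ⟮t⟯ := mem_adjoin_simple_self ℚ t
    have ham : ((a : ℂ)) ∈ ℚ⟮t⟯ := IntermediateField.natCast_mem ℚ⟮t⟯ a
    have h2m : ((2 : ℂ)) ∈ ℚ⟮t⟯ := by exact_mod_cast IntermediateField.natCast_mem ℚ⟮t⟯ 2
    apply le_antisymm
    · rw [adjoin_simple_le_iff]
      rcases mul_eq_zero.mp hfac with h1 | h1
      · have hwv : w = (t + a) / 2 := by linear_combination h1 / 2
        rw [hwv]
        exact div_mem (add_mem htm ham) h2m
      · have hwv : w = (t - a) / 2 := by linear_combination h1 / 2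
        rw [hwv]
        exact div_mem (sub_mem htm ham) h2m
    · rw [adjoin_simple_le_iff]
      exact add_mem (mem_adjoin_simple_self ℚ w) (inv_mem (mem_adjoin_simple_self ℚ w))
end

section
/- Let c be an integer with |c| > 2 such that c is not of the form a^2 - 2 or a^2 + 2 for any integer a. Then x^4 - c x^2 + 1 is irreducible over Q. -/
open Polynomial

private lemma monic_quad_eq {p : ℤ[X]} (hm : p.Monic) (hd : p.natDegree = 2) :
    p = X ^ 2 + C (p.coeff 1) * X + C (p.coeff 0) := by
  ext n
  rcases n with _ | _ | _ | n
  · simp only [coeff_add, coeff_X_pow, coeff_C_mul, coeff_X, coeff_C]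
    norm_num
  · simp only [coeff_add, coeff_X_pow, coeff_C_mul, coeff_X, coeff_C]
    norm_num
  · have h2 : p.coeff 2 = 1 := by
      have := hm.coeff_natDegree
      rwa [hd] at this
    simp only [coeff_add, coeff_X_pow, coeff_C_mul, coeff_X, coeff_C, h2]
    norm_num
  · have h3 : p.coeff (n + 3) = 0 := coeff_eq_zero_of_natDegree_lt (by omega)
    simp only [coeff_add, coeff_X_pow, coeff_C_mul, coeff_X, coeff_C, h3]
    norm_num
    omega

private lemma quad_mul (a1 a0 d1 d0 : ℤ) :
    (X ^ 2 + C a1 * X + C a0) * (X ^ 2 + C d1 * X + C d0)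
      = X ^ 4 + C (a1 + d1) * X ^ 3 + C (a0 + d0 + a1 * d1) * X ^ 2
        + C (a1 * d0 + a0 * d1) * X + C (a0 * d0) := by
  simp only [C_add, C_mul]; ring

private lemma int_irred (c : ℤ) (hc : 2 < |c|)
    (h1 : ¬ ∃ a : ℤ, c = a ^ 2 - 2) (h2 : ¬ ∃ a : ℤ, c = a ^ 2 + 2) :
    Irreducible (X ^ 4 - C c * X ^ 2 + 1 : ℤ[X]) := by
  set P : ℤ[X] := X ^ 4 - C c * X ^ 2 + 1 with hP
  have hmon : P.Monic := by rw [hP]; monicity!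
  have hdeg : P.natDegree = 4 := by rw [hP]; compute_degree!
  have hcabs : c ≠ 2 ∧ c ≠ -2 := by constructor <;> rintro rfl <;> simp at hc
  have noroot : ∀ b : ℤ, b ^ 4 - c * b ^ 2 + 1 ≠ 0 := by
    intro b hb
    have hmul : b ^ 2 * (c - b ^ 2) = 1 := by ring_nf; linarith
    have hdv : (b ^ 2 : ℤ) ∣ 1 := ⟨c - b ^ 2, hmul.symm⟩
    have hle := Int.le_of_dvd one_pos hdv
    have hge := sq_nonneg b
    have hb2 : b ^ 2 = 0 ∨ b ^ 2 = 1 := by omega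
    rcases hb2 with hb2 | hb2
    · rw [hb2, zero_mul] at hmul; exact one_ne_zero hmul.symm
    · rw [hb2, one_mul] at hmul
      exact hcabs.1 (by linarith)
  have nolin : ∀ q : ℤ[X], q.Monic → q.natDegree = 1 → ¬ q ∣ P := by
    intro q hq hq1 hdvdP
    rw [hq.eq_X_add_C hq1] at hdvdP
    have hroot : P.IsRoot (-(q.coeff 0)) := by
      rw [← dvd_iff_isRoot]
      convert hdvdP using 1
      rw [C_neg, sub_neg_eq_add]
    have hev : (-(q.coeff 0)) ^ 4 - c * (-(q.coeff 0)) ^ 2 + 1 = 0 := by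
      simpa [hP, IsRoot] using hroot
    exact noroot (-(q.coeff 0)) hev
  have noquad : ∀ q r : ℤ[X], q.Monic → r.Monic → q.natDegree = 2 → r.natDegree = 2 →
      P ≠ q * r := by
    intro q r hq hr hq2 hr2 habs
    rw [monic_quad_eq hq hq2, monic_quad_eq hr hr2, quad_mul] at habs
    set a1 := q.coeff 1; set a0 := q.coeff 0; set d1 := r.coeff 1; set d0 := r.coeff 0
    have e3 : (0 : ℤ) = a1 + d1 := by
      have := congrArg (fun p => Polynomial.coeff p 3) habs
      simp only [hP, coeff_add, coeff_sub, coeff_C_mul, coeff_X_pow, coeff_X, coeff_C,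
        coeff_one] at this
      norm_num at this
      exact this
    have e2 : (-c : ℤ) = a0 + d0 + a1 * d1 := by
      have := congrArg (fun p => Polynomial.coeff p 2) habs
      simp only [hP, coeff_add, coeff_sub, coeff_C_mul, coeff_X_pow, coeff_X, coeff_C,
        coeff_one] at this
      norm_num at this
      linarith
    have e0 : (1 : ℤ) = a0 * d0 := by
      have := congrArg (fun p => Polynomial.coeff p 0) habs
      simp only [hP, coeff_add, coeff_sub, coeff_C_mul, coeff_X_pow, coeff_X, coeff_C,
        coeff_one] at this
      norm_num at this
      exact this
    rcases Int.mul_eq_one_iff_eq_one_or_neg_one.mp e0.symm with ⟨hA, hD⟩ | ⟨hA, hD⟩ <;>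
      rw [hA, hD] at e2
    · exact h1 ⟨a1, by linear_combination -e2 + a1 * e3⟩
    · exact h2 ⟨a1, by linear_combination -e2 + a1 * e3⟩
  constructor
  · intro hu
    have := natDegree_eq_zero_of_isUnit hu
    omega
  intro a b hab
  by_contra hcon
  push_neg at hcon
  obtain ⟨hua, hub⟩ := hcon
  have ha0 : a ≠ 0 := by rintro rfl; rw [zero_mul] at hab; exact hmon.ne_zero hab
  have hb0 : b ≠ 0 := by rintro rfl; rw [mul_zero] at hab; exact hmon.ne_zero hab
  have hlead : a.leadingCoeff * b.leadingCoeff = 1 := by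
    have := congrArg leadingCoeff hab
    rw [leadingCoeff_mul, hmon.leadingCoeff] at this
    exact this.symm
  have hda : a.natDegree + b.natDegree = 4 := by
    rw [← natDegree_mul ha0 hb0, ← hab, hdeg]
  obtain ⟨a', b', ha', hb', hab', hdeqa, hdeqb⟩ :
      ∃ a' b' : ℤ[X], a'.Monic ∧ b'.Monic ∧ P = a' * b' ∧
        a'.natDegree = a.natDegree ∧ b'.natDegree = b.natDegree := by
    rcases Int.mul_eq_one_iff_eq_one_or_neg_one.mp hlead with ⟨hu1, hu2⟩ | ⟨hu1, hu2⟩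
    · exact ⟨a, b, hu1, hu2, hab, rfl, rfl⟩
    · refine ⟨-a, -b, ?_, ?_, by rw [hab]; ring, natDegree_neg a, natDegree_neg b⟩
      · rw [Monic, leadingCoeff_neg, hu1]; norm_num
      · rw [Monic, leadingCoeff_neg, hu2]; norm_num
  have hda0 : a.natDegree ≠ 0 := by
    intro h
    obtain ⟨x, hx⟩ := natDegree_eq_zero.mp h
    apply hua
    rw [← hx]
    exact isUnit_C.mpr (IsUnit.of_mul_eq_one (a := x) b.leadingCoeff
      (by rw [← leadingCoeff_C x, hx]; exact hlead))
  have hdb0 : b.natDegree ≠ 0 := by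
    intro h
    obtain ⟨x, hx⟩ := natDegree_eq_zero.mp h
    apply hub
    rw [← hx]
    refine isUnit_C.mpr (IsUnit.of_mul_eq_one (a := x) a.leadingCoeff ?_)
    rw [← leadingCoeff_C x, hx, mul_comm]
    exact hlead
  have hcase : a.natDegree = 1 ∨ a.natDegree = 2 ∨ a.natDegree = 3 := by omega
  rcases hcase with h | h | h
  · exact nolin a' ha' (by omega) ⟨b', hab'⟩
  · exact noquad a' b' ha' hb' (by omega) (by omega) hab'
  · exact nolin b' hb' (by omega) ⟨a', by rw [hab', mul_comm]⟩

/-- For `|c| > 2` with `c` not of the form `a^2 - 2` nor `a^2 + 2`,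
the polynomial `x^4 - c x^2 + 1` is irreducible over `ℚ`. -/
theorem quartic_irreducible (c : ℤ) (hc : 2 < |c|)
    (h1 : ¬ ∃ a : ℤ, c = a ^ 2 - 2) (h2 : ¬ ∃ a : ℤ, c = a ^ 2 + 2) :
    Irreducible (X ^ 4 - C (c : ℚ) * X ^ 2 + 1 : Polynomial ℚ) := by
  have hmon : (X ^ 4 - C c * X ^ 2 + 1 : ℤ[X]).Monic := by monicity!
  have hmap : (X ^ 4 - C (c : ℚ) * X ^ 2 + 1 : Polynomial ℚ)
      = (X ^ 4 - C c * X ^ 2 + 1 : ℤ[X]).map (algebraMap ℤ ℚ) := by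
    simp [Polynomial.map_add, Polynomial.map_sub, Polynomial.map_mul, Polynomial.map_pow,
      Polynomial.map_one, Polynomial.map_X, map_C]
  rw [hmap]
  exact hmon.irreducible_iff_irreducible_map_fraction_map.mp (int_irred c hc h1 h2)
end
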